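/- The Neumann Kac kernel is a probability kernel: for every u in the closed cylinder [-1,1]×T^{d-1}, the integral over v ∈ Λ of J^neum(u,v) dv equals 1. -/

import Mathlib

open MeasureTheory

section Aux

variable {V : Type*} [MeasurableSpace V]

/-- The reflection `v ↦ (c - v₁, v₂)` as a measurable equivalence. -/
def reflMEquiv (V : Type*) [MeasurableSpace V] (c : ℝ) : (ℝ × V) ≃ᵐ (ℝ × V) where
  toFun v := (c - v.1, v.2)
  invFun v := (c - v.1, v.2)
  left_inv v := by simp
  right_inv v := by simp
  measurable_toFun := (measurable_const.sub measurable_fst).prodMk measurable_snd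
  measurable_invFun := (measurable_const.sub measurable_fst).prodMk measurable_snd

lemma reflMEquiv_coe (c : ℝ) :
    ⇑(reflMEquiv V c) = fun v : ℝ × V => (c - v.1, v.2) := rfl

/-- Either the product measure `volume.prod ν` is trivial, or vertical lines are
null and the horizontal reflections are measure preserving. -/
theorem prod_good (ν : Measure V) :
    (volume : Measure ℝ).prod ν = 0 ∨
    ((∀ c : ℝ, (volume : Measure ℝ).prod ν {p : ℝ × V | p.1 = c} = 0) ∧
     (∀ c : ℝ, MeasurePreserving (fun v : ℝ × V => (c - v.1, v.2))
        ((volume : Measure ℝ).prod ν) ((volume : Measure ℝ).prod ν))) := by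
  by_cases h : AEMeasurable (fun x : ℝ => ν.map (Prod.mk x)) (volume : Measure ℝ)
  · right
    obtain ⟨g, hg, hfg⟩ := h
    have hbind : (volume : Measure ℝ).prod ν = Measure.bind volume g := by
      rw [Measure.prod_def]
      unfold Measure.bind
      rw [Measure.map_congr hfg]
    constructor
    · intro c
      have hs : MeasurableSet {p : ℝ × V | p.1 = c} :=
        measurable_fst (measurableSet_singleton c)
      rw [hbind, Measure.bind_apply hs hg.aemeasurable]
      have h0 : ∀ᵐ x ∂(volume : Measure ℝ), g x {p : ℝ × V | p.1 = c} = 0 := by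
        have hne : ∀ᵐ x ∂(volume : Measure ℝ), x ≠ c := by
          rw [ae_iff]
          simpa using Real.volume_singleton (x := c)
        filter_upwards [hfg, hne] with x hx hxc
        rw [← hx, Measure.map_apply measurable_prodMk_left hs]
        have he : (Prod.mk x ⁻¹' {p : ℝ × V | p.1 = c}) = ∅ := by
          ext y; simp [hxc]
        rw [he, measure_empty]
      rw [lintegral_congr_ae h0, lintegral_zero]
    · intro c
      have hT : Measurable (fun v : ℝ × V => (c - v.1, v.2)) :=
        (measurable_const.sub measurable_fst).prodMk measurable_snd
      refine ⟨hT, ?_⟩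
      have hmp : MeasurePreserving (fun x : ℝ => c - x) volume volume :=
        Measure.measurePreserving_sub_left volume c
      ext s hs
      rw [Measure.map_apply hT hs, hbind, Measure.bind_apply (hT hs) hg.aemeasurable,
        Measure.bind_apply hs hg.aemeasurable]
      have e1 : ∀ᵐ x ∂(volume : Measure ℝ),
          g x ((fun v : ℝ × V => (c - v.1, v.2)) ⁻¹' s)
            = (ν.map (Prod.mk (c - x))) s := by
        filter_upwards [hfg] with x hx
        rw [← hx, Measure.map_apply measurable_prodMk_left (hT hs),
          Measure.map_apply measurable_prodMk_left hs]
        rfl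
      have e2 : ∀ᵐ x ∂(volume : Measure ℝ),
          (ν.map (Prod.mk (c - x))) s = g (c - x) s := by
        have := hmp.quasiMeasurePreserving.ae_eq hfg
        filter_upwards [this] with x hx
        exact congrFun (congrArg _ hx) s
      calc ∫⁻ x, g x ((fun v : ℝ × V => (c - v.1, v.2)) ⁻¹' s) ∂volume
          = ∫⁻ x, g (c - x) s ∂volume := lintegral_congr_ae (e1.and e2 |>.mono
            fun x hx => hx.1.trans hx.2)
        _ = ∫⁻ x, g x s ∂volume :=
            hmp.lintegral_comp ((Measure.measurable_coe hs).comp hg)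
  · left
    rw [Measure.prod_def]
    unfold Measure.bind
    rw [Measure.map_of_not_aemeasurable h, Measure.join_zero]

end Aux

/-- the Neumann Kac kernel is a probability kernel: for every
`u` in the closed cylinder, `∫_Λ J^neum(u,v) dv = 1`. -/
theorem neumann_kac_probability_kernel
    {V : Type*} [AddCommGroup V] [MeasureSpace V]
    (J : ℝ × V → ℝ × V → ℝ)
    (hJ01 : ∀ u v, J u v ∈ Set.Icc (0 : ℝ) 1)
    (hsymm : ∀ u v, J u v = J v u)
    (htrans : ∀ u v, J u v = J 0 (v - u))
    (hrange : ∀ w : ℝ × V, 1 < |w.1| → J 0 w = 0)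
    (hprob : ∀ u, (∫ v, J u v) = 1)
    (Jneum : ℝ × V → ℝ × V → ℝ)
    (hJneum : ∀ u v : ℝ × V,
      Jneum u v = J u v + J u (2 - v.1, v.2) + J u (-2 - v.1, v.2)) :
    ∀ u : ℝ × V, u.1 ∈ Set.Icc (-1 : ℝ) 1 →
      (∫ v in {p : ℝ × V | p.1 ∈ Set.Ioo (-1 : ℝ) 1}, Jneum u v) = 1 := by
  intro u hu
  have hvol : (volume : Measure (ℝ × V)) = (volume : Measure ℝ).prod volume := rfl
  rcases prod_good (volume : Measure V) with h0 | ⟨hline, hrefl⟩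
  · exfalso
    have h1 := hprob u
    rw [show (volume : Measure (ℝ × V)) = 0 from hvol.trans h0] at h1
    simp at h1
  -- integrability of J u
  have hInt : Integrable (fun v => J u v) (volume : Measure (ℝ × V)) := by
    by_contra h
    have h1 := hprob u
    rw [integral_undef h] at h1
    norm_num at h1
  -- vanishing away from the diagonal strip
  have hvan : ∀ v : ℝ × V, 1 < |v.1 - u.1| → J u v = 0 := by
    intro v h
    rw [htrans u v]
    exact hrange (v - u) (by simpa using h)
  -- strips
  set S : ℝ → ℝ → Set (ℝ × V) := fun a b => {p : ℝ × V | p.1 ∈ Set.Ioo a b} with hS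
  have hSm : ∀ a b, MeasurableSet (S a b) := fun a b =>
    measurable_fst measurableSet_Ioo
  -- reflections are measure preserving for `volume` on `ℝ × V`
  have hrefl' : ∀ c : ℝ, MeasurePreserving (fun v : ℝ × V => (c - v.1, v.2))
      (volume : Measure (ℝ × V)) (volume : Measure (ℝ × V)) := by
    intro c
    rw [hvol]
    exact hrefl c
  have hTemb : ∀ c : ℝ, MeasurableEmbedding (fun v : ℝ × V => (c - v.1, v.2)) := by
    intro c
    have := (reflMEquiv V c).measurableEmbedding
    rwa [reflMEquiv_coe] at this
  -- integrability of reflected kernels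
  have hIntT : ∀ c : ℝ, Integrable (fun v : ℝ × V => J u (c - v.1, v.2))
      (volume : Measure (ℝ × V)) := by
    intro c
    exact ((hrefl' c).integrable_comp_emb (hTemb c)).mpr hInt
  -- change of variables for the two reflected pieces
  have hA : (∫ v in S (-1) 1, J u (2 - v.1, v.2)) = ∫ v in S 1 3, J u v := by
    have hpre : S (-1) 1 = (fun v : ℝ × V => (2 - v.1, v.2)) ⁻¹' (S 1 3) := by
      ext p
      simp only [hS, Set.mem_setOf_eq, Set.mem_Ioo, Set.mem_preimage]
      constructor
      · rintro ⟨h1, h2⟩; constructor <;> linarith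
      · rintro ⟨h1, h2⟩; constructor <;> linarith
    rw [hpre]
    exact (hrefl' 2).setIntegral_preimage_emb (hTemb 2) _ _
  have hB : (∫ v in S (-1) 1, J u (-2 - v.1, v.2)) = ∫ v in S (-3) (-1), J u v := by
    have hpre : S (-1) 1 = (fun v : ℝ × V => (-2 - v.1, v.2)) ⁻¹' (S (-3) (-1)) := by
      ext p
      simp only [hS, Set.mem_setOf_eq, Set.mem_Ioo, Set.mem_preimage]
      constructor
      · rintro ⟨h1, h2⟩; constructor <;> linarith
      · rintro ⟨h1, h2⟩; constructor <;> linarith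
    rw [hpre]
    exact (hrefl' (-2)).setIntegral_preimage_emb (hTemb (-2)) _ _
  -- disjointness
  have hd1 : Disjoint (S (-1) 1) (S 1 3) := by
    rw [Set.disjoint_left]
    rintro p ⟨_, h2⟩ ⟨h3, _⟩
    linarith
  have hd2 : Disjoint (S (-1) 1 ∪ S 1 3) (S (-3) (-1)) := by
    rw [Set.disjoint_left]
    rintro p hp ⟨_, h4⟩
    rcases hp with ⟨h1, _⟩ | ⟨h1, _⟩ <;> linarith
  -- a.e. statement discarding the two boundary lines
  have hN : ∀ᵐ v : ℝ × V ∂volume, ¬(v.1 = 1 ∨ v.1 = -1) := by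
    rw [ae_iff]
    simp only [not_not]
    have : {v : ℝ × V | v.1 = 1 ∨ v.1 = -1}
        = {v : ℝ × V | v.1 = 1} ∪ {v : ℝ × V | v.1 = -1} := by
      ext v; simp [Set.mem_union]
    rw [this, hvol]
    exact measure_union_null (hline 1) (hline (-1))
  calc (∫ v in S (-1) 1, Jneum u v)
      = ∫ v in S (-1) 1,
          (J u v + J u (2 - v.1, v.2) + J u (-2 - v.1, v.2)) := by
        simp_rw [hJneum]
    _ = (∫ v in S (-1) 1, J u v) + (∫ v in S (-1) 1, J u (2 - v.1, v.2))
          + ∫ v in S (-1) 1, J u (-2 - v.1, v.2) := by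
        have h12 : Integrable (fun v : ℝ × V => J u v + J u (2 - v.1, v.2))
            (volume.restrict (S (-1) 1)) :=
          (hInt.integrableOn).add ((hIntT 2).integrableOn)
        rw [integral_add h12 ((hIntT (-2)).integrableOn),
          integral_add hInt.integrableOn (hIntT 2).integrableOn]
    _ = (∫ v in S (-1) 1, J u v) + (∫ v in S 1 3, J u v)
          + ∫ v in S (-3) (-1), J u v := by rw [hA, hB]
    _ = ∫ v in (S (-1) 1 ∪ S 1 3) ∪ S (-3) (-1), J u v := by
        rw [setIntegral_union hd2 (hSm (-3) (-1))
            (hInt.integrableOn.union hInt.integrableOn) hInt.integrableOn,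
          setIntegral_union hd1 (hSm 1 3) hInt.integrableOn hInt.integrableOn]
    _ = ∫ v, J u v := by
        apply setIntegral_eq_integral_of_ae_compl_eq_zero
        filter_upwards [hN] with v hv hvD
        push_neg at hv
        obtain ⟨hv1, hv2⟩ := hv
        apply hvan
        simp only [hS, Set.mem_union, Set.mem_setOf_eq, Set.mem_Ioo, not_or,
          not_and] at hvD
        obtain ⟨⟨hD1, hD2⟩, hD3⟩ := hvD
        push_neg at hD1 hD2 hD3
        obtain ⟨hu1, hu2⟩ := hu
        have hx : v.1 ≥ 3 ∨ v.1 ≤ -3 := by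
          by_contra hc
          push_neg at hc
          obtain ⟨hc1, hc2⟩ := hc
          have ha1 : (-1 : ℝ) ≤ v.1 := hD3 hc2
          have ha2 : (-1 : ℝ) < v.1 := lt_of_le_of_ne ha1 (Ne.symm hv2)
          have ha3 : (1 : ℝ) ≤ v.1 := hD1 ha2
          have ha4 : (1 : ℝ) < v.1 := lt_of_le_of_ne ha3 (Ne.symm hv1)
          have := hD2 ha4
          linarith
        rcases hx with h | h
        · rw [lt_abs]; left; linarith
        · rw [lt_abs]; right; linarith
    _ = 1 := hprob u
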